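/- Let G be a non-abelian finite n-centralizer semi-extraspecial p-group for a prime p. Then p divides n−2 and |G/Z(G)| ≤ (n−2)². -/

import Mathlib

/-- The set of element centralizers of a group `G`. -/
def centSet (G : Type*) [Group G] : Set (Subgroup G) :=
  Set.range fun x : G => Subgroup.centralizer {x}

/-- A finite `p`-group is extraspecial if its commutator subgroup equals its center and the
center has order `p`. -/
def IsExtraspecial (p : ℕ) (G : Type*) [Group G] : Prop :=
  Finite G ∧ IsPGroup p G ∧ commutator G = Subgroup.center G ∧
    Nat.card (Subgroup.center G) = p

/-- A finite `p`-group is semi-extraspecial if for every maximal subgroup `N` of the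
center `Z(G)`, the quotient `G/N` is extraspecial. -/
def IsSemiExtraspecial (p : ℕ) (G : Type*) [Group G] : Prop :=
  Finite G ∧ IsPGroup p G ∧
    ∀ (N : Subgroup G) (hN : N.Normal), N < Subgroup.center G →
      (∀ K : Subgroup G, N < K → K ≤ Subgroup.center G → K = Subgroup.center G) →
      letI := hN
      IsExtraspecial p (G ⧸ N)

section Aux

variable {G : Type*} [Group G]

open scoped commutatorElement


theorem myNormal {N : Subgroup G} (h : N ≤ Subgroup.center G) : N.Normal :=
  ⟨fun n hn g => by
    have h1 : g * n = n * g := Subgroup.mem_center_iff.mp (h hn) g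
    have h2 : g * n * g⁻¹ = n := by rw [h1, mul_inv_cancel_right]
    rw [h2]; exact hn⟩

theorem mem_self_centralizer (g : G) : g ∈ Subgroup.centralizer {g} :=
  Subgroup.mem_centralizer_iff.mpr (by rintro h rfl; rfl)

theorem centralizer_singleton_eq_top_iff (g : G) :
    Subgroup.centralizer {g} = ⊤ ↔ g ∈ Subgroup.center G := by
  rw [Subgroup.centralizer_eq_top_iff_subset, Set.singleton_subset_iff, SetLike.mem_coe]

theorem centralizer_inv (a : G) : Subgroup.centralizer {a⁻¹} = Subgroup.centralizer {a} := by
  ext g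
  simp only [Subgroup.mem_centralizer_iff, Set.mem_singleton_iff, forall_eq]
  constructor
  · intro h
    have : Commute a⁻¹ g := h
    simpa using this.inv_left.eq
  · intro h
    exact (Commute.inv_left_iff.mpr h : Commute a⁻¹ g)

theorem centralizer_mul_left {a : G} (ha : a ∈ Subgroup.center G) (b : G) :
    Subgroup.centralizer {a * b} = Subgroup.centralizer {b} := by
  have hc : ∀ g : G, g * a = a * g := Subgroup.mem_center_iff.mp ha
  ext g
  simp only [Subgroup.mem_centralizer_iff, Set.mem_singleton_iff, forall_eq]
  constructor
  · intro h
    have h2 : a * (b * g) = a * (g * b) := by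
      calc a * (b * g) = a * b * g := by rw [mul_assoc]
        _ = g * (a * b) := h
        _ = g * a * b := by rw [mul_assoc]
        _ = a * g * b := by rw [hc g]
        _ = a * (g * b) := by rw [mul_assoc]
    exact mul_left_cancel h2
  · intro h
    calc a * b * g = a * (b * g) := by rw [mul_assoc]
      _ = a * (g * b) := by rw [h]
      _ = a * g * b := by rw [mul_assoc]
      _ = g * a * b := by rw [hc g]
      _ = g * (a * b) := by rw [mul_assoc]

theorem centralizer_mul_right {a : G} (ha : a ∈ Subgroup.center G) (b : G) :
    Subgroup.centralizer {b * a} = Subgroup.centralizer {b} := by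
  have hc : ∀ g : G, g * a = a * g := Subgroup.mem_center_iff.mp ha
  ext g
  simp only [Subgroup.mem_centralizer_iff, Set.mem_singleton_iff, forall_eq]
  constructor
  · intro h
    have h2 : b * g * a = g * b * a := by
      calc b * g * a = b * (g * a) := by rw [mul_assoc]
        _ = b * (a * g) := by rw [hc g]
        _ = b * a * g := by rw [mul_assoc]
        _ = g * (b * a) := h
        _ = g * b * a := by rw [mul_assoc]
    exact mul_right_cancel h2
  · intro h
    calc b * a * g = b * (a * g) := by rw [mul_assoc]
      _ = b * (g * a) := by rw [hc g]
      _ = b * g * a := by rw [mul_assoc]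
      _ = g * b * a := by rw [h]
      _ = g * (b * a) := by rw [mul_assoc]

theorem exists_part (C : Subgroup G)
    (key2 : ∀ a b : G, a ∉ Subgroup.center G → b ∉ Subgroup.center G →
      Subgroup.centralizer {a} = Subgroup.centralizer {b} → a * b ∉ Subgroup.center G →
      Subgroup.centralizer {a * b} = Subgroup.centralizer {a}) :
    ∃ U : Subgroup G, ∀ g : G,
      g ∈ U ↔ g ∈ Subgroup.center G ∨
        (g ∉ Subgroup.center G ∧ Subgroup.centralizer {g} = C) := by
  refine
    ⟨{ carrier := setOf (fun g => g ∈ Subgroup.center G ∨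
         (g ∉ Subgroup.center G ∧ Subgroup.centralizer {g} = C)),
       one_mem' := Or.inl (one_mem _),
       mul_mem' := ?_,
       inv_mem' := ?_ }, fun g => Iff.rfl⟩
  · rintro a b (haZ | ⟨haZ, haC⟩) (hbZ | ⟨hbZ, hbC⟩)
    · exact Or.inl (mul_mem haZ hbZ)
    · refine Or.inr ⟨fun h => hbZ ?_, (centralizer_mul_left haZ b).trans hbC⟩
      have : a⁻¹ * (a * b) ∈ Subgroup.center G := mul_mem (inv_mem haZ) h
      rwa [inv_mul_cancel_left] at this
    · refine Or.inr ⟨fun h => haZ ?_, (centralizer_mul_right hbZ a).trans haC⟩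
      have : (a * b) * b⁻¹ ∈ Subgroup.center G := mul_mem h (inv_mem hbZ)
      rwa [mul_inv_cancel_right] at this
    · by_cases hab : a * b ∈ Subgroup.center G
      · exact Or.inl hab
      · exact Or.inr ⟨hab, (key2 a b haZ hbZ (haC.trans hbC.symm) hab).trans haC⟩
  · rintro a (haZ | ⟨haZ, haC⟩)
    · exact Or.inl (inv_mem haZ)
    · refine Or.inr ⟨fun h => haZ (by simpa using inv_mem h), (centralizer_inv a).trans haC⟩

theorem exists_quot [Finite G] {p : ℕ} (hp : p.Prime) (hse : IsSemiExtraspecial p G)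
    {I : Subgroup G} (hI : I < Subgroup.center G) :
    ∃ N : Subgroup G, I ≤ N ∧ N ≤ Subgroup.center G ∧
      ∃ hN : N.Normal,
        (letI := hN; commutator (G ⧸ N) = Subgroup.center (G ⧸ N)) ∧
        (letI := hN; Subgroup.center (G ⧸ N) = (Subgroup.center G).map (QuotientGroup.mk' N)) := by
  haveI : Finite (Subgroup G) :=
    Finite.of_injective (fun H : Subgroup G => (H : Set G)) SetLike.coe_injective
  have hSfin : {K : Subgroup G | I ≤ K ∧ K < Subgroup.center G}.Finite := Set.toFinite _
  obtain ⟨N, hNmem, hNmax⟩ := hSfin.toFinset.exists_maximal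
    (by rw [Set.Finite.toFinset_nonempty]; exact ⟨I, le_refl I, hI⟩)
  rw [Set.Finite.mem_toFinset] at hNmem
  obtain ⟨hIN, hNlt⟩ := hNmem
  have hmax : ∀ K : Subgroup G, N < K → K ≤ Subgroup.center G → K = Subgroup.center G := by
    intro K hNK hKZ
    by_contra hne
    refine hNK.not_ge (hNmax ?_ hNK.le)
    simp only [Set.Finite.mem_toFinset]
    exact ⟨hIN.trans hNK.le, lt_of_le_of_ne hKZ hne⟩
  have hN : N.Normal := myNormal hNlt.le
  obtain ⟨-, -, hcomm, hcard⟩ := hse.2.2 N hN hNlt hmax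
  refine ⟨N, hIN, hNlt.le, hN, hcomm, ?_⟩
  have hmaple : (Subgroup.center G).map (QuotientGroup.mk' N) ≤ Subgroup.center (G ⧸ N) := by
    rintro q hq
    obtain ⟨w, hw, rfl⟩ := Subgroup.mem_map.mp hq
    rw [Subgroup.mem_center_iff]
    intro q'
    induction q' using QuotientGroup.induction_on with
    | H g =>
      show (g : G ⧸ N) * (w : G) = (w : G) * (g : G ⧸ N)
      rw [← QuotientGroup.mk_mul, ← QuotientGroup.mk_mul,
        Subgroup.mem_center_iff.mp hw g]
  obtain ⟨w, hwZ, hwN⟩ := SetLike.exists_of_lt hNlt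
  have hne1 : (Subgroup.center G).map (QuotientGroup.mk' N) ≠ ⊥ := by
    intro hbot
    have : QuotientGroup.mk' N w ∈ (Subgroup.center G).map (QuotientGroup.mk' N) :=
      Subgroup.mem_map.mpr ⟨w, hwZ, rfl⟩
    rw [hbot, Subgroup.mem_bot] at this
    exact hwN ((QuotientGroup.eq_one_iff w).mp this)
  have hdvd : Nat.card ((Subgroup.center G).map (QuotientGroup.mk' N)) ∣ p := by
    rw [← hcard]; exact Subgroup.card_dvd_of_le hmaple
  rcases (Nat.Prime.eq_one_or_self_of_dvd hp _ hdvd) with h1 | h1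
  · exact absurd (Subgroup.card_eq_one.mp h1) hne1
  · exact (Subgroup.eq_of_le_of_card_ge hmaple (by rw [hcard, h1])).symm

theorem commutator_mem_center [Finite G] {p : ℕ} (hp : p.Prime)
    (hse : IsSemiExtraspecial p G) (hnab : Subgroup.center G ≠ ⊤) :
    ∀ a b : G, ⁅a, b⁆ ∈ Subgroup.center G := by
  have hG : Nontrivial G := by
    obtain ⟨x, hx⟩ : ∃ x : G, x ∉ Subgroup.center G := by
      by_contra h
      push_neg at h
      exact hnab ((Subgroup.eq_top_iff' _).mpr h)
    exact ⟨x, 1, fun h => hx (h ▸ one_mem _)⟩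
  haveI : Fact p.Prime := ⟨hp⟩
  have hcnt : (⊥ : Subgroup G) < Subgroup.center G :=
    bot_lt_iff_ne_bot.mpr
      (((Subgroup.center G).nontrivial_iff_ne_bot).mp (IsPGroup.center_nontrivial hse.2.1))
  obtain ⟨N, -, hNZ, hN, hcomm, hcent⟩ := exists_quot hp hse hcnt
  intro a b
  have h1 : (QuotientGroup.mk' N) ⁅a, b⁆ ∈ commutator (G ⧸ N) := by
    rw [map_commutatorElement, _root_.commutator_def]
    exact Subgroup.commutator_mem_commutator (Subgroup.mem_top _) (Subgroup.mem_top _)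
  rw [hcomm, hcent] at h1
  obtain ⟨w, hw, hweq⟩ := Subgroup.mem_map.mp h1
  have hweq' : ((w : G) : G ⧸ N) = ((⁅a, b⁆ : G) : G ⧸ N) := by
    exact hweq
  have : w⁻¹ * ⁅a, b⁆ ∈ N := QuotientGroup.eq.mp hweq'
  have h2 : ⁅a, b⁆ = w * (w⁻¹ * ⁅a, b⁆) := by rw [mul_inv_cancel_left]
  rw [h2]
  exact mul_mem hw (hNZ this)

theorem centralizer_card [Finite G] {p : ℕ} (hp : p.Prime)
    (hse : IsSemiExtraspecial p G) (hnab : Subgroup.center G ≠ ⊤)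
    {x : G} (hx : x ∉ Subgroup.center G) :
    Nat.card G = Nat.card (Subgroup.center G) * Nat.card (Subgroup.centralizer {x}) := by
  have hcl := commutator_mem_center hp hse hnab
  have hmul : ∀ a b : G, ⁅x, a * b⁆ = ⁅x, a⁆ * ⁅x, b⁆ := by
    intro a b
    have hc : ∀ g : G, g * ⁅x, b⁆ = ⁅x, b⁆ * g :=
      Subgroup.mem_center_iff.mp (hcl x b)
    have hswap : a⁻¹ * (x * b * x⁻¹ * b⁻¹) * a = x * b * x⁻¹ * b⁻¹ := by
      have := hc a⁻¹
      simp only [commutatorElement_def] at this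
      rw [← mul_assoc] at this ⊢
      rw [this, inv_mul_cancel_right]
    have hrw : x * a * x⁻¹ * a⁻¹ * (x * b * x⁻¹ * b⁻¹) =
        x * a * x⁻¹ * (a⁻¹ * (x * b * x⁻¹ * b⁻¹) * a) * a⁻¹ := by group
    simp only [commutatorElement_def]
    rw [hrw, hswap]
    group
  let f : G →* G := MonoidHom.mk' (fun g => ⁅x, g⁆) hmul
  have hker : f.ker = Subgroup.centralizer {x} := by
    ext g
    rw [MonoidHom.mem_ker]
    show ⁅x, g⁆ = 1 ↔ _
    rw [commutatorElement_eq_one_iff_commute]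
    simp only [Subgroup.mem_centralizer_iff, Set.mem_singleton_iff, forall_eq]
    exact Iff.rfl
  have hrange : f.range = Subgroup.center G := by
    have hle : f.range ≤ Subgroup.center G := by
      rintro g ⟨a, rfl⟩
      exact hcl x a
    by_contra hne
    obtain ⟨N, hrN, hNZ, hN, -, hcent⟩ := exists_quot hp hse (lt_of_le_of_ne hle hne)
    have hxc : (x : G ⧸ N) ∈ Subgroup.center (G ⧸ N) := by
      rw [Subgroup.mem_center_iff]
      intro q
      induction q using QuotientGroup.induction_on with
      | H g =>
        have hm : (QuotientGroup.mk' N) ⁅x, g⁆ = 1 :=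
          (QuotientGroup.eq_one_iff _).mpr (hrN ⟨g, rfl⟩)
        rw [map_commutatorElement] at hm
        simp only [QuotientGroup.mk'_apply] at hm
        have hcomm1 : Commute (x : G ⧸ N) (g : G ⧸ N) :=
          commutatorElement_eq_one_iff_commute.mp hm
        exact hcomm1.symm.eq
    rw [hcent] at hxc
    obtain ⟨w, hw, hweq⟩ := Subgroup.mem_map.mp hxc
    have hweq' : ((w : G) : G ⧸ N) = ((x : G) : G ⧸ N) := by
      simpa [QuotientGroup.mk'_apply] using hweq
    have hwn : w⁻¹ * x ∈ N := QuotientGroup.eq.mp hweq'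
    have : x = w * (w⁻¹ * x) := by rw [mul_inv_cancel_left]
    exact hx (this ▸ mul_mem hw (hNZ hwn))
  have h1 : Nat.card G = Nat.card (G ⧸ f.ker) * Nat.card f.ker :=
    Subgroup.card_eq_card_quotient_mul_card_subgroup f.ker
  have h2 : Nat.card (G ⧸ f.ker) = Nat.card f.range :=
    Nat.card_congr (QuotientGroup.quotientKerEquivRange f).toEquiv
  rw [h1, h2, hrange, hker]

theorem key2' [Finite G] {p : ℕ} (hp : p.Prime)
    (hse : IsSemiExtraspecial p G) (hnab : Subgroup.center G ≠ ⊤) :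
    ∀ a b : G, a ∉ Subgroup.center G → b ∉ Subgroup.center G →
      Subgroup.centralizer {a} = Subgroup.centralizer {b} → a * b ∉ Subgroup.center G →
      Subgroup.centralizer {a * b} = Subgroup.centralizer {a} := by
  intro a b ha hb hab habZ
  have hle : Subgroup.centralizer {a} ≤ Subgroup.centralizer {a * b} := by
    intro g hg
    have hga : a * g = g * a := by
      have := Subgroup.mem_centralizer_iff.mp hg
      exact this a rfl
    have hgb : b * g = g * b := by
      rw [hab] at hg
      exact Subgroup.mem_centralizer_iff.mp hg b rfl
    refine Subgroup.mem_centralizer_iff.mpr ?_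
    rintro h rfl
    calc a * b * g = a * (b * g) := by rw [mul_assoc]
      _ = a * (g * b) := by rw [hgb]
      _ = a * g * b := by rw [mul_assoc]
      _ = g * a * b := by rw [hga]
      _ = g * (a * b) := by rw [mul_assoc]
  have hc1 := centralizer_card hp hse hnab ha
  have hc2 := centralizer_card hp hse hnab habZ
  have hzpos : 0 < Nat.card (Subgroup.center G) := Nat.card_pos
  have hcardeq : Nat.card (Subgroup.centralizer {a}) =
      Nat.card (Subgroup.centralizer ({a * b} : Set G)) :=
    Nat.eq_of_mul_eq_mul_left hzpos (hc1.symm.trans hc2)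
  exact (Subgroup.eq_of_le_of_card_ge hle hcardeq.ge).symm


end Aux

/-- A non-abelian finite `n`-centralizer semi-extraspecial `p`-group satisfies `p ∣ n - 2`
and `|G/Z(G)| ≤ (n-2)²`. -/
theorem stmt12 (G : Type*) [Group G] [Finite G]
    (hG : ¬∀ a b : G, a * b = b * a) (n p : ℕ) (hp : p.Prime)
    (hse : IsSemiExtraspecial p G)
    (hcard : (centSet G).ncard = n) :
    p ∣ (n - 2) ∧ Nat.card (G ⧸ Subgroup.center G) ≤ (n - 2) ^ 2 := by

  classical
  haveI : Fact p.Prime := ⟨hp⟩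
  haveI := Fintype.ofFinite G
  have hnab : Subgroup.center G ≠ ⊤ := by
    intro h
    exact hG fun a b => (Subgroup.mem_center_iff.mp (h.symm ▸ Subgroup.mem_top a) b).symm
  have key2 := key2' hp hse hnab
  choose U hU using fun C : Subgroup G => exists_part C key2
  set z := Nat.card (Subgroup.center G) with hzdef
  set Zf : Finset G := Set.toFinset ((Subgroup.center G : Set G)) with hZfdef
  have hcardF : ∀ H : Subgroup G, (Set.toFinset (H : Set G)).card = Nat.card H := by
    intro H
    rw [Set.toFinset_card]
    exact (Nat.card_eq_fintype_card).symm
  have hZf : Zf.card = z := hcardF _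
  set Snc : Finset G := Finset.univ \ Zf with hSncdef
  have hsncZ : ∀ g : G, g ∈ Snc ↔ g ∉ Subgroup.center G := by
    intro g
    simp [hSncdef, hZfdef, Set.mem_toFinset]
  set P : Finset (Subgroup G) := Snc.image (fun g => Subgroup.centralizer {g}) with hPdef
  set r := P.card with hrdef
  -- n = r + 1
  have hset : centSet G = insert ⊤ (↑P : Set (Subgroup G)) := by
    ext C
    constructor
    · rintro ⟨g, rfl⟩
      by_cases hg : g ∈ Subgroup.center G
      · exact Or.inl ((centralizer_singleton_eq_top_iff g).mpr hg)
      · exact Or.inr (Finset.mem_coe.mpr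
          (Finset.mem_image_of_mem _ ((hsncZ g).mpr hg)))
    · rintro (rfl | hC)
      · exact ⟨1, (centralizer_singleton_eq_top_iff 1).mpr (one_mem _)⟩
      · obtain ⟨g, -, rfl⟩ := Finset.mem_image.mp (Finset.mem_coe.mp hC)
        exact ⟨g, rfl⟩
  have htopP : (⊤ : Subgroup G) ∉ (↑P : Set (Subgroup G)) := by
    intro h
    obtain ⟨g, hg, hEq⟩ := Finset.mem_image.mp (Finset.mem_coe.mp h)
    exact ((hsncZ g).mp hg) ((centralizer_singleton_eq_top_iff g).mp hEq)
  rw [hset, Set.ncard_insert_of_notMem htopP (P : Set (Subgroup G)).toFinite,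
    Set.ncard_coe_finset] at hcard
  -- hcard : r + 1 = n
  have hwit : ∀ C ∈ P, ∃ g, g ∉ Subgroup.center G ∧ Subgroup.centralizer {g} = C := by
    intro C hC
    obtain ⟨g, hg, hEq⟩ := Finset.mem_image.mp hC
    exact ⟨g, (hsncZ g).mp hg, hEq⟩
  have hZU : ∀ C : Subgroup G, Subgroup.center G ≤ U C :=
    fun C g hg => (hU C g).mpr (Or.inl hg)
  have hdvd : ∀ C : Subgroup G, z ∣ Nat.card (U C) :=
    fun C => Subgroup.card_dvd_of_le (hZU C)
  set a : Subgroup G → ℕ := fun C => Nat.card (U C) / z with hadef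
  have hzpos : 0 < z := Nat.card_pos
  have hza : ∀ C, z * a C = Nat.card (U C) := fun C => Nat.mul_div_cancel' (hdvd C)
  set aG := Nat.card (G ⧸ Subgroup.center G) with haGdef
  have hzaG : Nat.card G = aG * z :=
    Subgroup.card_eq_card_quotient_mul_card_subgroup _
  -- fiber counting
  have hfibcard : ∀ C ∈ P,
      (Snc.filter (fun g => Subgroup.centralizer {g} = C)).card + z = Nat.card (U C) := by
    intro C hC
    have hfib : Snc.filter (fun g => Subgroup.centralizer {g} = C)
        = Set.toFinset ((U C : Set G)) \ Zf := by
      ext g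
      simp only [Finset.mem_filter, Finset.mem_sdiff, Finset.mem_univ, true_and,
        Set.mem_toFinset, SetLike.mem_coe, hU C g, hSncdef, hZfdef]
      tauto
    have hsub : Zf ⊆ Set.toFinset ((U C : Set G)) := by
      intro g hg
      rw [Set.mem_toFinset] at hg ⊢
      exact hZU C hg
    rw [hfib, ← hZf, Finset.card_sdiff_add_card_eq_card hsub, hcardF]
  have hcount : Snc.card = ∑ C ∈ P, (Snc.filter (fun g => Subgroup.centralizer {g} = C)).card :=
    Finset.card_eq_sum_card_fiberwise (fun g hg => Finset.mem_image_of_mem _ hg)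
  have hsnccard : Snc.card + z = Nat.card G := by
    rw [hSncdef, ← hZf, Finset.card_sdiff_add_card_eq_card (Finset.subset_univ Zf),
      Nat.card_eq_fintype_card]
    rfl
  have e1 : ∑ C ∈ P, Nat.card (U C) = Snc.card + r * z := by
    calc ∑ C ∈ P, Nat.card (U C)
        = ∑ C ∈ P, ((Snc.filter (fun g => Subgroup.centralizer {g} = C)).card + z) :=
          Finset.sum_congr rfl (fun C hC => (hfibcard C hC).symm)
      _ = (∑ C ∈ P, (Snc.filter (fun g => Subgroup.centralizer {g} = C)).card) + r * z := by
          rw [Finset.sum_add_distrib, Finset.sum_const, smul_eq_mul]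
      _ = Snc.card + r * z := by rw [← hcount]
  have star : (∑ C ∈ P, a C) + 1 = aG + r := by
    have e2 : z * ((∑ C ∈ P, a C) + 1) = z * (aG + r) := by
      rw [Nat.mul_add, Nat.mul_add, Finset.mul_sum, mul_one]
      have : ∑ C ∈ P, z * a C = ∑ C ∈ P, Nat.card (U C) :=
        Finset.sum_congr rfl (fun C _ => hza C)
      rw [this, e1]
      have : Snc.card + r * z + z = z * aG + z * r := by
        rw [mul_comm z aG, mul_comm z r]
        have := hsnccard
        have := hzaG
        omega
      omega
    exact Nat.eq_of_mul_eq_mul_left hzpos e2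
  have hpg := hse.2.1
  have hpa : ∀ C ∈ P, p ∣ a C := by
    intro C hC
    obtain ⟨x0, hx0, hx0C⟩ := hwit C hC
    have hx0U : x0 ∈ U C := (hU C x0).mpr (Or.inr ⟨hx0, hx0C⟩)
    have hne : Subgroup.center G ≠ U C := fun h => hx0 (h ▸ hx0U)
    obtain ⟨j, hj⟩ := (hpg.to_subgroup (U C)).exists_card_eq
    have hadvd : a C ∣ p ^ j := ⟨z, by rw [← hj, ← hza C, mul_comm]⟩
    obtain ⟨e, -, haeq⟩ := (Nat.dvd_prime_pow hp).mp hadvd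
    have hane : a C ≠ 1 := by
      intro h1
      have hcz : Nat.card (U C) = z := by rw [← hza C, h1, mul_one]
      exact hne (Subgroup.eq_of_le_of_card_ge (hZU C) hcz.le)
    have he1 : e ≠ 0 := fun h => hane (by rw [haeq, h, pow_zero])
    rw [haeq]
    exact dvd_pow_self p he1
  have hpaG : p ∣ aG := by
    obtain ⟨j, hj⟩ := hpg.exists_card_eq
    have hadvd : aG ∣ p ^ j := ⟨z, by rw [← hj, hzaG]⟩
    obtain ⟨e, -, haeq⟩ := (Nat.dvd_prime_pow hp).mp hadvd
    have hane : aG ≠ 1 := by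
      intro h1
      rw [h1, one_mul] at hzaG
      exact hnab (Subgroup.eq_top_of_card_eq _ hzaG.symm)
    have he1 : e ≠ 0 := fun h => hane (by rw [haeq, h, pow_zero])
    rw [haeq]
    exact dvd_pow_self p he1
  have hr1 : 1 ≤ r := by
    obtain ⟨g0, hg0⟩ : ∃ g : G, g ∉ Subgroup.center G := by
      by_contra h
      push_neg at h
      exact hnab ((Subgroup.eq_top_iff' _).mpr h)
    exact Finset.card_pos.mpr ⟨_, Finset.mem_image_of_mem _ ((hsncZ g0).mpr hg0)⟩
  -- the per-part bound
  have hbound : ∀ C ∈ P, a C ≤ r - 1 := by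
    intro C0 hC0
    obtain ⟨x0, hx0, hx0C⟩ := hwit C0 hC0
    have hCne : C0 ≠ ⊤ := fun h => hx0 ((centralizer_singleton_eq_top_iff x0).mp (hx0C.trans h))
    obtain ⟨v, hv⟩ : ∃ v : G, v ∉ C0 := by
      by_contra h
      push_neg at h
      exact hCne ((Subgroup.eq_top_iff' _).mpr h)
    have hUsubC : ∀ g ∈ U C0, g ∈ C0 := by
      intro g hg
      rcases (hU C0 g).mp hg with hZg | ⟨-, hgC⟩
      · rw [← hx0C]
        exact Subgroup.center_le_centralizer {x0} hZg
      · rw [← hgC]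
        exact mem_self_centralizer g
    have hvU : v ∉ U C0 := fun h => hv (hUsubC v h)
    set UF : Finset G := Set.toFinset ((U C0 : Set G)) with hUFdef
    set ψ : G → Subgroup G := fun u => Subgroup.centralizer {v * u} with hψdef
    have hvuZ : ∀ u ∈ U C0, v * u ∉ Subgroup.center G := by
      intro u hu h
      apply hvU
      have h2 : (v * u) * u⁻¹ ∈ U C0 := mul_mem (hZU C0 h) (inv_mem hu)
      rwa [mul_inv_cancel_right] at h2
    have hpsiP : ∀ u ∈ U C0, ψ u ∈ P.erase C0 := by
      intro u hu
      refine Finset.mem_erase.mpr ⟨?_, Finset.mem_image_of_mem _ ((hsncZ (v * u)).mpr (hvuZ u hu))⟩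
      intro hEq
      apply hvU
      have hvu : v * u ∈ U C0 := (hU C0 _).mpr (Or.inr ⟨hvuZ u hu, hEq⟩)
      have h2 : (v * u) * u⁻¹ ∈ U C0 := mul_mem hvu (inv_mem hu)
      rwa [mul_inv_cancel_right] at h2
    have hfiber : ∀ D ∈ UF.image ψ, (UF.filter (fun u => ψ u = D)).card ≤ z := by
      intro D hD
      obtain ⟨u0, hu0, hDEq⟩ := Finset.mem_image.mp hD
      have hu0' : u0 ∈ U C0 := by rwa [hUFdef, Set.mem_toFinset] at hu0
      have hDC : D ≠ C0 := by
        rw [← hDEq]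
        exact (Finset.mem_erase.mp (hpsiP u0 hu0')).1
      have hsub : UF.filter (fun u => ψ u = D) ⊆ Zf.image (fun w => u0 * w) := by
        intro u huf
        obtain ⟨huUF, hupsi⟩ := Finset.mem_filter.mp huf
        have hu' : u ∈ U C0 := by rwa [hUFdef, Set.mem_toFinset] at huUF
        have hmemD : ∀ w, w ∈ U C0 → ψ w = D → v * w ∈ U D :=
          fun w hw hww => (hU D _).mpr (Or.inr ⟨hvuZ w hw, hww⟩)
        have h1 := hmemD u0 hu0' hDEq
        have h2 := hmemD u hu' hupsi
        have h3 : u0⁻¹ * u ∈ U D := by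
          have h4 := mul_mem (inv_mem h1) h2
          rwa [mul_inv_rev, mul_assoc, inv_mul_cancel_left] at h4
        have h4 : u0⁻¹ * u ∈ U C0 := mul_mem (inv_mem hu0') hu'
        have h5 : u0⁻¹ * u ∈ Subgroup.center G := by
          by_contra h5
          rcases (hU D _).mp h3 with h | ⟨-, hd⟩
          · exact h5 h
          rcases (hU C0 _).mp h4 with h | ⟨-, hc⟩
          · exact h5 h
          exact hDC (hd.symm.trans hc)
        refine Finset.mem_image.mpr ⟨u0⁻¹ * u, ?_, by rw [mul_inv_cancel_left]⟩
        rw [hZfdef, Set.mem_toFinset]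
        exact h5
      calc (UF.filter (fun u => ψ u = D)).card
          ≤ (Zf.image (fun w => u0 * w)).card := Finset.card_le_card hsub
        _ ≤ Zf.card := Finset.card_image_le
        _ = z := hZf
    have himg : UF.image ψ ⊆ P.erase C0 := by
      intro D hD
      obtain ⟨u, hu, rfl⟩ := Finset.mem_image.mp hD
      exact hpsiP u (by rwa [hUFdef, Set.mem_toFinset] at hu)
    have hUFcard : UF.card ≤ z * (r - 1) := by
      calc UF.card ≤ z * (UF.image ψ).card := Finset.card_le_mul_card_image _ z hfiber
        _ ≤ z * (P.erase C0).card := Nat.mul_le_mul_left z (Finset.card_le_card himg)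
        _ = z * (r - 1) := by rw [Finset.card_erase_of_mem hC0]
    have hle2 : z * a C0 ≤ z * (r - 1) := by
      rw [hza C0, ← hcardF (U C0)]
      exact hUFcard
    exact Nat.le_of_mul_le_mul_left hle2 hzpos
  constructor
  · -- p ∣ n - 2
    obtain ⟨k, hk⟩ : p ∣ ∑ C ∈ P, a C := Finset.dvd_sum hpa
    obtain ⟨m, hm⟩ := hpaG
    rw [hk, hm] at star
    have hmk : m ≤ k := by
      by_contra hc
      push_neg at hc
      have h2 : p * (k + 1) ≤ p * m := Nat.mul_le_mul_left p hc
      rw [Nat.mul_succ] at h2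
      have h3 := hp.two_le
      generalize hA : p * k = A at star h2
      generalize hB : p * m = B at star h2
      omega
    refine ⟨k - m, ?_⟩
    have hsplit : p * (k - m) + p * m = p * k := by
      rw [← Nat.mul_add, Nat.sub_add_cancel hmk]
    generalize hT : p * (k - m) = T at hsplit ⊢
    generalize hA : p * k = A at star hsplit
    generalize hB : p * m = B at star hsplit
    omega
  · -- the bound
    have hsum : ∑ C ∈ P, a C ≤ r * (r - 1) := by
      calc ∑ C ∈ P, a C ≤ ∑ _C ∈ P, (r - 1) := Finset.sum_le_sum hbound
        _ = r * (r - 1) := by rw [Finset.sum_const, smul_eq_mul]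
    have hrq : r * (r - 1) = (r - 1) * (r - 1) + (r - 1) := by
      have hq : r = (r - 1) + 1 := by omega
      calc r * (r - 1) = ((r - 1) + 1) * (r - 1) := by rw [← hq]
        _ = (r - 1) * (r - 1) + (r - 1) := by ring
    have hn2 : n - 2 = r - 1 := by omega
    rw [hn2, pow_two]
    generalize hE : (r - 1) * (r - 1) = E at hrq
    omega
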